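/- If A = ⊕_{g∈G} A_g is a G-grading of A by a group G, then the grading is elementary (i.e., there exists a triple (g₁,g₂,g₃) ∈ G³ such that each matrix unit e_{ij} in A is homogeneous of degree g_i^{-1}g_j, and e_{11}+e_{33} is homogeneous of degree 1_G) if and only if the matrix units e_{12}, e_{13}, e_{23}, e_{22}, and e_{11}+e_{33} are all homogeneous elements. -/

import Mathlib

/-- The subalgebra `A` of `UT₃(K)` spanned by `e₁₁+e₃₃, e₂₂, e₁₂, e₂₃, e₁₃`. -/
def matAlgA (K : Type*) [Field K] : Submodule K (Matrix (Fin 3) (Fin 3) K) :=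
  Submodule.span K
    {!![1,0,0;0,0,0;0,0,1], !![0,0,0;0,1,0;0,0,0], !![0,1,0;0,0,0;0,0,0],
     !![0,0,0;0,0,1;0,0,0], !![0,0,1;0,0,0;0,0,0]}


private lemma uniq_deg {K : Type*} [Field K] {G : Type*} [Group G]
    (𝒜 : G → Submodule K (Matrix (Fin 3) (Fin 3) K))
    (hind : ∀ g, Disjoint (𝒜 g) (⨆ h ∈ ({h | h ≠ g} : Set G), 𝒜 h))
    {x : Matrix (Fin 3) (Fin 3) K} (hx : x ≠ 0) {g h : G}
    (hg : x ∈ 𝒜 g) (hh : x ∈ 𝒜 h) : g = h := by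
  by_contra hne
  have hle : 𝒜 g ≤ ⨆ k ∈ ({k | k ≠ h} : Set G), 𝒜 k :=
    le_iSup₂ (f := fun k (_ : k ∈ ({k | k ≠ h} : Set G)) => 𝒜 k) g hne
  exact hx (Submodule.disjoint_def.mp (hind h) x hh (hle hg))

/-- A `G`-grading of `A` is elementary (defined by a triple `(g₁,g₂,g₃)` with
`e_{ij}` of degree `gᵢ⁻¹gⱼ` and `e₁₁+e₃₃` of degree `1`) if and only if the
matrix units `e₁₂, e₂₃, e₁₃, e₂₂` and `e₁₁+e₃₃` are all homogeneous. -/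
theorem stmt_4 (K : Type*) [Field K] (G : Type*) [Group G]
    (𝒜 : G → Submodule K (Matrix (Fin 3) (Fin 3) K))
    (hle : ∀ g, 𝒜 g ≤ matAlgA K)
    (hsup : (⨆ g, 𝒜 g) = matAlgA K)
    (hind : ∀ g, Disjoint (𝒜 g) (⨆ h ∈ ({h | h ≠ g} : Set G), 𝒜 h))
    (hmul : ∀ g h : G, ∀ x y : Matrix (Fin 3) (Fin 3) K,
      x ∈ 𝒜 g → y ∈ 𝒜 h → x * y ∈ 𝒜 (g * h)) :
    (∃ g₁ g₂ g₃ : G,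
        !![(0:K),1,0;0,0,0;0,0,0] ∈ 𝒜 (g₁⁻¹ * g₂) ∧
        !![(0:K),0,0;0,0,1;0,0,0] ∈ 𝒜 (g₂⁻¹ * g₃) ∧
        !![(0:K),0,1;0,0,0;0,0,0] ∈ 𝒜 (g₁⁻¹ * g₃) ∧
        !![(0:K),0,0;0,1,0;0,0,0] ∈ 𝒜 (g₂⁻¹ * g₂) ∧
        !![(1:K),0,0;0,0,0;0,0,1] ∈ 𝒜 (1 : G))
      ↔
    ((∃ g, !![(0:K),1,0;0,0,0;0,0,0] ∈ 𝒜 g) ∧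
     (∃ g, !![(0:K),0,0;0,0,1;0,0,0] ∈ 𝒜 g) ∧
     (∃ g, !![(0:K),0,1;0,0,0;0,0,0] ∈ 𝒜 g) ∧
     (∃ g, !![(0:K),0,0;0,1,0;0,0,0] ∈ 𝒜 g) ∧
     (∃ g, !![(1:K),0,0;0,0,0;0,0,1] ∈ 𝒜 g)) := by
  constructor
  · rintro ⟨g₁, g₂, g₃, h12, h23, h13, h22, hu⟩
    exact ⟨⟨_, h12⟩, ⟨_, h23⟩, ⟨_, h13⟩, ⟨_, h22⟩, ⟨_, hu⟩⟩
  · rintro ⟨⟨a, ha⟩, ⟨b, hb⟩, ⟨c, hc⟩, ⟨d, hd⟩, ⟨e, he⟩⟩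
    have e22ne : (!![(0:K),0,0;0,1,0;0,0,0]) ≠ 0 := fun h => by
      simpa using congrFun (congrFun h 1) 1
    have une : (!![(1:K),0,0;0,0,0;0,0,1]) ≠ 0 := fun h => by
      simpa using congrFun (congrFun h 0) 0
    have sq22 : (!![(0:K),0,0;0,1,0;0,0,0]) * (!![(0:K),0,0;0,1,0;0,0,0])
        = !![(0:K),0,0;0,1,0;0,0,0] := by
      ext i j; fin_cases i <;> fin_cases j <;> simp [Matrix.mul_apply, Fin.sum_univ_succ, Matrix.vecHead, Matrix.vecTail]
    have squ : (!![(1:K),0,0;0,0,0;0,0,1]) * (!![(1:K),0,0;0,0,0;0,0,1])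
        = !![(1:K),0,0;0,0,0;0,0,1] := by
      ext i j; fin_cases i <;> fin_cases j <;> simp [Matrix.mul_apply, Fin.sum_univ_succ, Matrix.vecHead, Matrix.vecTail]
    have m1213 : (!![(0:K),1,0;0,0,0;0,0,0]) * (!![(0:K),0,0;0,0,1;0,0,0])
        = !![(0:K),0,1;0,0,0;0,0,0] := by
      ext i j; fin_cases i <;> fin_cases j <;> simp [Matrix.mul_apply, Fin.sum_univ_succ, Matrix.vecHead, Matrix.vecTail]
    have hd1 : d = 1 := by
      have h2 := hmul d d _ _ hd hd
      rw [sq22] at h2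
      have := uniq_deg 𝒜 hind e22ne h2 hd
      exact mul_eq_right.mp this
    have he1 : e = 1 := by
      have h2 := hmul e e _ _ he he
      rw [squ] at h2
      have := uniq_deg 𝒜 hind une h2 he
      exact mul_eq_right.mp this
    refine ⟨1, a, a * b, ?_, ?_, ?_, ?_, ?_⟩
    · simpa using ha
    · simpa using hb
    · have := hmul a b _ _ ha hb
      rw [m1213] at this
      simpa using this
    · simpa using (hd1 ▸ hd)
    · exact he1 ▸ he
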